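/- arXiv:math/0004097 — 2 statements merged into one kernel-verified Lean document; each statement's English description precedes it below -/
import Mathlib

section
/- Let A = End_k(V) with V finite-dimensional over a field k of characteristic ≠ 2, and let S be a k-involution (an anti-automorphism with S² = id) on A. Then there exists a non-degenerate bilinear form (·,·) on V, either symmetric or skew-symmetric, such that (a v, w) = (v, S(a) w) for all v, w ∈ V and a ∈ A. -/
/-- Albert's theorem: a `k`-involution on `End_k(V)` (char k ≠ 2) is the
adjoint map of some non-degenerate bilinear form on `V`, which is either
symmetric or skew-symmetric. -/
theorem involution_is_adjoint_of_form
    {k : Type*} [Field k] (hk : ringChar k ≠ 2)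
    {V : Type*} [AddCommGroup V] [Module k V] [FiniteDimensional k V]
    (S : Module.End k V →ₗ[k] Module.End k V)
    (hanti : ∀ a b : Module.End k V, S (a * b) = S b * S a)
    (hinv : ∀ a : Module.End k V, S (S a) = a) :
    ∃ B : LinearMap.BilinForm k V, B.Nondegenerate ∧
      ((∀ v w, B v w = B w v) ∨ (∀ v w, B v w = - B w v)) ∧
      ∀ (a : Module.End k V) (v w : V), B (a v) w = B v (S a w) := by
  rcases subsingleton_or_nontrivial V with hV | hV
  · exact ⟨0, ⟨fun v _ => Subsingleton.elim v 0, fun v _ => Subsingleton.elim v 0⟩, Or.inl (fun v w => rfl), fun a v w => rfl⟩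
  -- a dual functional for every nonzero vector
  have hdual : ∀ v : V, v ≠ 0 → ∃ f : V →ₗ[k] k, f v = 1 := by
    intro v hv
    have := (Module.forall_dual_apply_eq_zero_iff k v).not.mpr hv
    push_neg at this
    obtain ⟨f, hf⟩ := this
    exact ⟨(f v)⁻¹ • f, by simp [inv_mul_cancel₀ hf]⟩
  obtain ⟨v₀, hv₀⟩ := exists_ne (0 : V)
  obtain ⟨f₀, hf₀⟩ := hdual v₀ hv₀
  set e : Module.End k V := f₀.smulRight v₀ with he_def
  have he : e ≠ 0 := by
    intro h
    apply hv₀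
    have : e v₀ = v₀ := by simp [he_def, hf₀]
    rw [h] at this
    simpa using this.symm
  have hSinj : Function.Injective S := by
    intro a b hab
    have := congrArg S hab
    rwa [hinv, hinv] at this
  have hSe : S e ≠ 0 := fun h => he (hSinj (by rw [h, map_zero]))
  obtain ⟨w₁, hw₁⟩ : ∃ w₁, S e w₁ ≠ 0 := by
    by_contra h
    push_neg at h
    exact hSe (LinearMap.ext fun w => by simpa using h w)
  obtain ⟨f', hf'⟩ := hdual (S e w₁) hw₁
  -- the bilinear form
  have hsmul_add : ∀ v v' : V, f₀.smulRight (v + v') = f₀.smulRight v + f₀.smulRight v' := by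
    intro v v'; ext u; simp [smul_add]
  have hsmul_smul : ∀ (c : k) (v : V), f₀.smulRight (c • v) = c • f₀.smulRight v := by
    intro c v; ext u
    simp only [LinearMap.smulRight_apply, LinearMap.smul_apply, map_smul, smul_eq_mul]
    rw [smul_comm]
  set B : LinearMap.BilinForm k V := LinearMap.mk₂ k
    (fun v w => f' (S (f₀.smulRight v) w))
    (by intro v v' w
        show f' (S (f₀.smulRight (v + v')) w) = _
        rw [hsmul_add]; simp)
    (by intro c v w
        show f' (S (f₀.smulRight (c • v)) w) = _
        rw [hsmul_smul]; simp)
    (by intro v w w'; simp)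
    (by intro c v w; simp) with hB_def
  have hBapp : ∀ v w, B v w = f' (S (f₀.smulRight v) w) := fun v w => rfl
  -- the adjoint property
  have key : ∀ (a : Module.End k V) (v w : V), B (a v) w = B v (S a w) := by
    intro a v w
    have h1 : f₀.smulRight (a v) = a * f₀.smulRight v := by
      ext u; simp
    rw [hBapp, hBapp, h1, hanti]
    rfl
  have hB01 : B v₀ w₁ = 1 := by
    rw [hBapp, ← he_def, hf']
  -- nondegeneracy
  have hnd : B.Nondegenerate := by
    refine LinearMap.BilinForm.Nondegenerate.ofSeparatingLeft ?_
    intro v hv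
    by_contra h0
    obtain ⟨fv, hfv⟩ := hdual v h0
    have h1 : (fv.smulRight v₀) v = v₀ := by simp [hfv]
    have : B v₀ w₁ = 0 := by
      calc B v₀ w₁ = B ((fv.smulRight v₀) v) w₁ := by rw [h1]
        _ = B v (S (fv.smulRight v₀) w₁) := key _ _ _
        _ = 0 := hv _
    rw [hB01] at this
    exact one_ne_zero this
  -- the "reversed" adjoint property
  have key' : ∀ (a : Module.End k V) (v w : V), B w (a v) = B (S a w) v := by
    intro a v w
    rw [key (S a) w v, hinv]
  -- construct the intertwining map c with B (c v) w = B w v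
  set c : V →ₗ[k] V := (B.toDual hnd).symm.toLinearMap ∘ₗ B.flip with hc_def
  have hc : ∀ v w, B (c v) w = B w v := by
    intro v w
    have : B.toDual hnd (c v) = B.flip v := by
      simp [hc_def]
    have := congrArg (fun g => g w) this
    simpa [LinearMap.BilinForm.toDual_def] using this
  have hcomm : ∀ (a : Module.End k V) (v : V), c (a v) = a (c v) := by
    intro a v
    have h1 : ∀ w, B (c (a v) - a (c v)) w = 0 := by
      intro w
      have e1 : B (c (a v)) w = B w (a v) := hc _ _
      have e2 : B (a (c v)) w = B w (a v) := by
        rw [key a (c v) w, hc v (S a w), ← key' a v w]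
      simp only [map_sub, LinearMap.sub_apply, e1, e2, sub_self]
    have := hnd.1 _ h1
    rwa [sub_eq_zero] at this
  -- c is a scalar
  set lam : k := f₀ (c v₀) with hlam_def
  have hscal : ∀ v : V, c v = lam • v := by
    intro v
    have h1 : (f₀.smulRight v) v₀ = v := by simp [hf₀]
    calc c v = c ((f₀.smulRight v) v₀) := by rw [h1]
      _ = (f₀.smulRight v) (c v₀) := hcomm _ _
      _ = lam • v := by simp [hlam_def]
  have hlam : ∀ v w, B w v = lam * B v w := by
    intro v w
    rw [← hc v w, hscal v, map_smul, LinearMap.smul_apply, smul_eq_mul]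
  have hsq : lam * lam = 1 := by
    have h := hlam w₁ v₀
    rw [hlam v₀ w₁, hB01, mul_one] at h
    exact h.symm
  rcases mul_self_eq_one_iff.mp hsq with h1 | h1
  · exact ⟨B, hnd, Or.inl (fun v w => by rw [hlam w v, h1, one_mul]), key⟩
  · exact ⟨B, hnd, Or.inr (fun v w => by rw [hlam w v, h1, neg_one_mul]), key⟩
end

section
/- Let G be a finite group. Then 1 + t = ∑_{χ ∈ Irr(G)} ν₂(χ) χ(1), where t is the number of elements of order 2 in G, Irr(G) is the set of irreducible complex characters, and ν₂(χ) = (1/|G|) ∑_{g∈G} χ(g²) is the Frobenius–Schur indicator. -/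
open CategoryTheory LinearMap Module

set_option linter.unusedSectionVars false
set_option maxHeartbeats 1000000

namespace FSAux
open scoped Classical

variable {G : Type} [Group G] [Fintype G]

/-- The subrepresentation on an invariant subspace. -/
noncomputable def subRep (V : FDRep ℂ G) (p : Submodule ℂ V)
    (hp : ∀ g : G, Set.MapsTo (V.ρ g) p p) : FDRep ℂ G :=
  FDRep.of
    { toFun := fun g => (V.ρ g).restrict (hp g)
      map_one' := by ext x; simp [LinearMap.restrict_apply]
      map_mul' := fun g h => by ext x; simp [LinearMap.restrict_apply]; rfl }

lemma subRep_char (V : FDRep ℂ G) (p : Submodule ℂ V)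
    (hp : ∀ g : G, Set.MapsTo (V.ρ g) p p) (g : G) :
    (subRep V p hp).character g = LinearMap.trace ℂ p ((V.ρ g).restrict (hp g)) := rfl

lemma char_add (V : FDRep ℂ G) (p q : Submodule ℂ V)
    (hp : ∀ g : G, Set.MapsTo (V.ρ g) p p) (hq : ∀ g : G, Set.MapsTo (V.ρ g) q q)
    (h : IsCompl p q) (g : G) :
    V.character g = (subRep V p hp).character g + (subRep V q hq).character g := by
  rw [subRep_char, subRep_char, ← LinearMap.trace_prodMap']
  let e := Submodule.prodEquivOfIsCompl p q h
  have key : LinearMap.prodMap ((V.ρ g).restrict (hp g)) ((V.ρ g).restrict (hq g))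
      = e.symm.conj (V.ρ g) := by
    apply LinearMap.ext
    rintro ⟨a, b⟩
    apply e.injective
    have : e ((LinearMap.prodMap ((V.ρ g).restrict (hp g)) ((V.ρ g).restrict (hq g))) (a, b))
        = V.ρ g a + V.ρ g b := by
      simp [e, Submodule.coe_prodEquivOfIsCompl', LinearMap.restrict_apply]
      rfl
    rw [this, LinearEquiv.conj_apply]
    simp only [LinearMap.coe_comp, Function.comp_apply, LinearEquiv.coe_coe,
      LinearEquiv.apply_symm_apply, LinearEquiv.symm_symm]
    have : e (a, b) = (a : V) + (b : V) := by simp [e, Submodule.coe_prodEquivOfIsCompl']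
    rw [this, map_add]
  rw [key, LinearMap.trace_conj']
  rfl

/-- Maschke: an invariant subspace has an invariant complement. -/
lemma exists_invariant_compl (V : FDRep ℂ G) (p : Submodule ℂ V)
    (hp : ∀ g : G, Set.MapsTo (V.ρ g) p p) :
    ∃ q : Submodule ℂ V, (∀ g : G, Set.MapsTo (V.ρ g) q q) ∧ IsCompl p q := by
  obtain ⟨q₀, hq₀⟩ := Submodule.exists_isCompl p
  set π₀ : V →ₗ[ℂ] V := p.subtype ∘ₗ p.linearProjOfIsCompl q₀ hq₀ with hπ₀
  have hπ₀_mem : ∀ x : V, π₀ x ∈ p := fun x => (p.linearProjOfIsCompl q₀ hq₀ x).2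
  have hπ₀_id : ∀ x ∈ p, π₀ x = x := fun x hx => by
    simp [hπ₀, Submodule.linearProjOfIsCompl_apply_left hq₀ ⟨x, hx⟩]
    exact congrArg Subtype.val (Submodule.linearProjOfIsCompl_apply_left hq₀ ⟨x, hx⟩)
  set P : V →ₗ[ℂ] V :=
    (Fintype.card G : ℂ)⁻¹ • ∑ g : G, (V.ρ g) ∘ₗ π₀ ∘ₗ (V.ρ g⁻¹) with hP
  have hcard : (Fintype.card G : ℂ) ≠ 0 := by
    exact_mod_cast Nat.cast_ne_zero.mpr Fintype.card_ne_zero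
  have hP_mem : ∀ x : V, P x ∈ p := by
    intro x
    rw [hP]
    simp only [LinearMap.smul_apply, LinearMap.sum_apply, LinearMap.comp_apply]
    exact Submodule.smul_mem _ _ (Submodule.sum_mem _ fun g _ => hp g (hπ₀_mem _))
  have hP_id : ∀ x ∈ p, P x = x := by
    intro x hx
    rw [hP]
    simp only [LinearMap.smul_apply, LinearMap.sum_apply, LinearMap.comp_apply]
    have : ∀ g : G, (V.ρ g) (π₀ ((V.ρ g⁻¹) x)) = x := by
      intro g
      rw [hπ₀_id _ (hp g⁻¹ hx)]
      have := LinearMap.congr_fun (V.ρ.map_mul g g⁻¹) x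
      simp only [mul_inv_cancel, map_one, Module.End.one_apply, Module.End.mul_apply] at this
      exact this.symm
    rw [Finset.sum_congr rfl fun g _ => this g, Finset.sum_const, Finset.card_univ,
      ← Nat.cast_smul_eq_nsmul ℂ, smul_smul, inv_mul_cancel₀ hcard, one_smul]
  have hP_comm : ∀ (h : G) (x : V), P ((V.ρ h) x) = (V.ρ h) (P x) := by
    intro h x
    rw [hP]
    simp only [LinearMap.smul_apply, LinearMap.sum_apply, LinearMap.comp_apply, map_smul,
      map_sum]
    congr 1
    refine Fintype.sum_bijective (fun g => h⁻¹ * g) (Group.mulLeft_bijective h⁻¹) _ _ fun g => ?_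
    have h2 : (V.ρ g⁻¹) ((V.ρ h) x) = (V.ρ (h⁻¹ * g)⁻¹) x := by
      have h4 := LinearMap.congr_fun (V.ρ.map_mul g⁻¹ h) x
      rw [Module.End.mul_apply] at h4
      have e : (h⁻¹ * g)⁻¹ = g⁻¹ * h := by group
      rw [e, h4]
    have h3 := LinearMap.congr_fun (V.ρ.map_mul h (h⁻¹ * g)) (π₀ ((V.ρ (h⁻¹ * g)⁻¹) x))
    rw [Module.End.mul_apply] at h3
    have e2 : h * (h⁻¹ * g) = g := by group
    rw [e2] at h3
    rw [h2, h3]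
  refine ⟨LinearMap.ker P, fun g x hx => ?_, ?_⟩
  · have : P ((V.ρ g) x) = (V.ρ g) (P x) := hP_comm g x
    simp only [SetLike.mem_coe, LinearMap.mem_ker] at hx ⊢
    rw [this, hx, map_zero]
  · constructor
    · rw [Submodule.disjoint_def]
      intro x hxp hxk
      rw [LinearMap.mem_ker] at hxk
      rw [← hP_id x hxp, hxk]
    · rw [codisjoint_iff_le_sup]
      intro x _
      have hxk : x - P x ∈ LinearMap.ker P := by
        rw [LinearMap.mem_ker, map_sub, hP_id (P x) (hP_mem x), sub_self]
      exact Submodule.mem_sup.mpr ⟨P x, hP_mem x, x - P x, hxk, by abel⟩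

lemma simple_of_irreducible (V : FDRep ℂ G) (h0 : finrank ℂ V ≠ 0)
    (hirr : ∀ p : Submodule ℂ V, (∀ g : G, Set.MapsTo (V.ρ g) p p) → p = ⊥ ∨ p = ⊤) :
    Simple V := by
  constructor
  intro Y f hmono
  constructor
  · intro hiso hf0
    have h1 : (𝟙 V : V ⟶ V) = 0 := by
      have h2 : inv f ≫ f = inv f ≫ 0 := congrArg (fun g => inv f ≫ g) hf0
      rw [← IsIso.inv_hom_id f, h2, Limits.comp_zero]
    apply h0
    rw [finrank_zero_iff]
    constructor
    intro a b
    have ha := congrArg (fun φ : V ⟶ V => (Action.Hom.hom φ).hom.hom a) h1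
    have hb := congrArg (fun φ : V ⟶ V => (Action.Hom.hom φ).hom.hom b) h1
    simp only [Action.id_hom, Action.zero_hom] at ha hb
    change a = (0 : V →ₗ[ℂ] V) a at ha
    change b = (0 : V →ₗ[ℂ] V) b at hb
    rw [LinearMap.zero_apply] at ha hb
    rw [ha, hb]
  · intro hf0
    have hinj : Function.Injective f.hom.hom.hom := by
      have : Mono ((Action.forget (FGModuleCat ℂ) (MonCat.of G) ⋙
          forget₂ (FGModuleCat ℂ) (ModuleCat ℂ)).map f) := inferInstance
      rw [ModuleCat.mono_iff_injective] at this
      exact this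
    set r : Submodule ℂ V := LinearMap.range f.hom.hom.hom with hr
    have hrinv : ∀ g : G, Set.MapsTo (V.ρ g) r r := by
      intro g x hx
      obtain ⟨y, rfl⟩ := hx
      refine ⟨Y.ρ g y, ?_⟩
      have hc : ((V.ρ g : V →ₗ[ℂ] V).comp f.hom.hom.hom)
          = (f.hom.hom.hom.comp (Y.ρ g : Y →ₗ[ℂ] Y)) := by
        ext y; exact (congrArg (fun φ => φ.hom.hom y) (f.comm g)).symm
      exact (LinearMap.congr_fun hc y).symm
    have hrne : r ≠ ⊥ := by
      intro hbot
      apply hf0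
      apply Action.hom_ext
      ext y
      have : f.hom.hom.hom y ∈ r := ⟨y, rfl⟩
      rw [hbot, Submodule.mem_bot] at this
      simpa [Action.zero_hom] using this
    have hrtop : r = ⊤ := (hirr r hrinv).resolve_left hrne
    have hsurj : Function.Surjective f.hom.hom.hom := by
      rw [← LinearMap.range_eq_top, ← hr, hrtop]
    set e : Y.V ≃ₗ[ℂ] V.V := LinearEquiv.ofBijective f.hom.hom.hom ⟨hinj, hsurj⟩ with he
    have : IsIso f.hom := by
      refine ⟨⟨(FGModuleCat.ofHom e.symm.toLinearMap : V.V ⟶ Y.V), ?_, ?_⟩⟩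
      · ext x
        exact e.symm_apply_apply x
      · ext x
        exact e.apply_symm_apply x
    infer_instance

variable {ι : Type} [Fintype ι]

lemma char_decomp (W : ι → FDRep ℂ G)
    (hcomplete : ∀ X : FDRep ℂ G, Simple X → ∃ i, Nonempty (X ≅ W i)) :
    ∀ (n : ℕ) (V : FDRep ℂ G), finrank ℂ V = n →
      ∃ c : ι → ℕ, ∀ g : G, V.character g = ∑ i, (c i : ℂ) * (W i).character g := by
  intro n
  induction n using Nat.strong_induction_on with
  | _ n IH =>
    intro V hn
    by_cases hex : ∃ p : Submodule ℂ V, (∀ g : G, Set.MapsTo (V.ρ g) p p) ∧ p ≠ ⊥ ∧ p ≠ ⊤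
    · obtain ⟨p, hp, hpbot, hptop⟩ := hex
      obtain ⟨q, hq, hcompl⟩ := exists_invariant_compl V p hp
      have hqtop : q ≠ ⊤ := by
        intro hq'
        apply hpbot
        have := hcompl.disjoint
        rw [hq', disjoint_top] at this
        exact this
      have hplt : finrank ℂ p < n := hn ▸ Submodule.finrank_lt hptop
      have hqlt : finrank ℂ q < n := hn ▸ Submodule.finrank_lt hqtop
      obtain ⟨cp, hcp⟩ := IH _ hplt (subRep V p hp) rfl
      obtain ⟨cq, hcq⟩ := IH _ hqlt (subRep V q hq) rfl
      refine ⟨cp + cq, fun g => ?_⟩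
      rw [char_add V p q hp hq hcompl g, hcp g, hcq g, ← Finset.sum_add_distrib]
      refine Finset.sum_congr rfl fun i _ => ?_
      simp only [Pi.add_apply]
      push_cast
      ring
    · push_neg at hex
      by_cases h0 : finrank ℂ V = 0
      · refine ⟨0, fun g => ?_⟩
        have hss : Subsingleton V := finrank_zero_iff.mp h0
        have hz : V.ρ g = 0 := Subsingleton.elim _ _
        simp [FDRep.character, hz]
      · have hsimp : Simple V :=
          simple_of_irreducible V h0 fun p hinv => or_iff_not_imp_left.mpr (hex p hinv)
        obtain ⟨i, ⟨iso⟩⟩ := hcomplete V hsimp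
        refine ⟨fun j => if j = i then 1 else 0, fun g => ?_⟩
        rw [FDRep.char_iso iso]
        have hterm : ∀ j : ι, (((if j = i then (1:ℕ) else 0) : ℕ) : ℂ) * (W j).character g
            = if j = i then (W j).character g else 0 := by
          intro j; split <;> simp
        rw [Finset.sum_congr rfl fun j _ => hterm j, Finset.sum_ite_eq' Finset.univ i]
        simp

variable (G) in
/-- The left regular representation. -/
noncomputable def regRep : FDRep ℂ G :=
  FDRep.of (Representation.ofMulAction ℂ G G)

lemma regRep_char (g : G) :
    (regRep G).character g = if g = 1 then (Fintype.card G : ℂ) else 0 := by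
  have : (regRep G).character g
      = LinearMap.trace ℂ (MonoidAlgebra ℂ G) (Representation.ofMulAction ℂ G G g) := rfl
  rw [this, LinearMap.trace_eq_matrix_trace ℂ (MonoidAlgebra.basis G ℂ), Matrix.trace]
  have hdiag : ∀ x : G, Matrix.diag (LinearMap.toMatrix (MonoidAlgebra.basis G ℂ)
      (MonoidAlgebra.basis G ℂ) (Representation.ofMulAction ℂ G G g)) x
      = if g = 1 then 1 else 0 := by
    intro x
    rw [Matrix.diag_apply, LinearMap.toMatrix_apply]
    simp only [MonoidAlgebra.basis_apply]
    rw [Representation.ofMulAction_single]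
    show (Finsupp.single (g • x) (1:ℂ)) x = _
    rw [Finsupp.single_apply]
    congr 1
    simp only [eq_iff_iff]
    constructor
    · intro h; exact mul_eq_right.mp h
    · intro h; rw [h]; exact one_mul x
  rw [Finset.sum_congr rfl fun x _ => hdiag x]
  simp [Finset.card_univ]

/-- Column orthogonality (at the identity column): `∑ χᵢ(h) χᵢ(1) = |G| · [h = 1]`. -/
lemma sum_char_mul_dim (W : ι → FDRep ℂ G)
    (hsimple : ∀ i, Simple (W i))
    (hdistinct : ∀ i j, i ≠ j → IsEmpty (W i ≅ W j))
    (hcomplete : ∀ X : FDRep ℂ G, Simple X → ∃ i, Nonempty (X ≅ W i)) (h : G) :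
    ∑ i, (W i).character h * (W i).character 1
      = if h = 1 then (Fintype.card G : ℂ) else 0 := by
  have hcard : (Fintype.card G : ℂ) ≠ 0 := Nat.cast_ne_zero.mpr Fintype.card_ne_zero
  obtain ⟨c, hc⟩ := char_decomp W hcomplete (finrank ℂ (regRep G)) (regRep G) rfl
  have horth : ∀ j i : ι, (Fintype.card G : ℂ)⁻¹ * ∑ g : G,
      (W j).character g * (W i).character g⁻¹ = if j = i then (1:ℂ) else 0 := by
    intro j i
    haveI := hsimple j
    haveI := hsimple i
    letI : Invertible ((Fintype.card G : ℂ)) := invertibleOfNonzero hcard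
    have horth' := FDRep.char_orthonormal (k := ℂ) (G := G) (W j) (W i)
    rw [Nat.card_eq_fintype_card] at horth'
    norm_num at horth'
    have horth'' : (Fintype.card G : ℂ)⁻¹ * ∑ g : G,
        (W j).character g * (W i).character g⁻¹
        = if Nonempty (W j ≅ W i) then (1:ℂ) else 0 := horth'
    rw [horth'']
    by_cases hji : j = i
    · subst hji
      rw [if_pos ⟨Iso.refl _⟩, if_pos rfl]
    · rw [if_neg (fun hne => (hdistinct j i hji).false hne.some), if_neg hji]
  have key : ∀ i, (c i : ℂ) = (W i).character 1 := by
    intro i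
    have hA1 : (Fintype.card G : ℂ)⁻¹ * ∑ g : G, (regRep G).character g * (W i).character g⁻¹
        = (W i).character 1 := by
      have hsum : ∑ g : G, (regRep G).character g * (W i).character g⁻¹
          = (Fintype.card G : ℂ) * (W i).character 1 := by
        rw [Finset.sum_eq_single 1]
        · rw [regRep_char, if_pos rfl, inv_one]
        · intro b _ hb; rw [regRep_char, if_neg hb, zero_mul]
        · intro hb; exact absurd (Finset.mem_univ 1) hb
      rw [hsum, ← mul_assoc, inv_mul_cancel₀ hcard, one_mul]
    have hA2 : (Fintype.card G : ℂ)⁻¹ * ∑ g : G, (regRep G).character g * (W i).character g⁻¹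
        = (c i : ℂ) := by
      have e1 : ∑ g : G, (regRep G).character g * (W i).character g⁻¹
          = ∑ j, (c j : ℂ) * ∑ g : G, (W j).character g * (W i).character g⁻¹ := by
        calc ∑ g : G, (regRep G).character g * (W i).character g⁻¹
            = ∑ g : G, ∑ j, (c j : ℂ) * ((W j).character g * (W i).character g⁻¹) := by
              refine Finset.sum_congr rfl fun g _ => ?_
              rw [hc g, Finset.sum_mul]
              exact Finset.sum_congr rfl fun j _ => by ring
          _ = ∑ j, ∑ g : G, (c j : ℂ) * ((W j).character g * (W i).character g⁻¹) :=
              Finset.sum_comm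
          _ = ∑ j, (c j : ℂ) * ∑ g : G, (W j).character g * (W i).character g⁻¹ := by
              refine Finset.sum_congr rfl fun j _ => (Finset.mul_sum _ _ _).symm
      rw [e1, Finset.mul_sum]
      have e2 : ∀ j : ι, (Fintype.card G : ℂ)⁻¹ *
          ((c j : ℂ) * ∑ g : G, (W j).character g * (W i).character g⁻¹)
          = (c j : ℂ) * (if j = i then (1:ℂ) else 0) := by
        intro j
        rw [← horth j i]
        ring
      rw [Finset.sum_congr rfl fun j _ => e2 j]
      rw [Finset.sum_congr rfl fun j _ => mul_ite (j = i) ((c j : ℂ)) 1 0]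
      simp
    rw [← hA2, hA1]
  have hfinal : ∑ i, (W i).character h * (W i).character 1 = (regRep G).character h := by
    rw [hc h]
    refine Finset.sum_congr rfl fun i _ => ?_
    rw [key i]
    ring
  rw [hfinal, regRep_char]

end FSAux

open FSAux

/-- `1 + t = ∑_{χ ∈ Irr(G)} ν₂(χ) χ(1)` where `t` is the number of elements of
order two of `G`, the sum is over a complete set of representatives of the
isomorphism classes of irreducible complex representations, and `ν₂` is the
Frobenius–Schur indicator. -/
theorem count_involutions_eq_sum_indicators
    {G : Type} [Group G] [Fintype G]
    {ι : Type} [Fintype ι] (W : ι → FDRep ℂ G)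
    (hsimple : ∀ i, Simple (W i))
    (hdistinct : ∀ i j, i ≠ j → IsEmpty (W i ≅ W j))
    (hcomplete : ∀ X : FDRep ℂ G, Simple X → ∃ i, Nonempty (X ≅ W i)) :
    (1 + (Nat.card {g : G // g * g = 1 ∧ g ≠ 1}) : ℂ) =
      ∑ i, ((Fintype.card G : ℂ)⁻¹ * ∑ g : G, (W i).character (g * g)) *
        (W i).character 1 := by
  classical
  have hcard : (Fintype.card G : ℂ) ≠ 0 := Nat.cast_ne_zero.mpr Fintype.card_ne_zero
  -- rewrite the RHS
  have hRHS : ∑ i, ((Fintype.card G : ℂ)⁻¹ * ∑ g : G, (W i).character (g * g)) *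
        (W i).character 1
      = (Fintype.card G : ℂ)⁻¹ *
          ∑ g : G, ∑ i, (W i).character (g * g) * (W i).character 1 := by
    calc ∑ i, ((Fintype.card G : ℂ)⁻¹ * ∑ g : G, (W i).character (g * g)) * (W i).character 1
        = ∑ i, ∑ g : G, (Fintype.card G : ℂ)⁻¹
            * ((W i).character (g * g) * (W i).character 1) := by
          refine Finset.sum_congr rfl fun i _ => ?_
          rw [mul_assoc, Finset.sum_mul, Finset.mul_sum]
      _ = ∑ g : G, ∑ i, (Fintype.card G : ℂ)⁻¹
            * ((W i).character (g * g) * (W i).character 1) := Finset.sum_comm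
      _ = (Fintype.card G : ℂ)⁻¹
            * ∑ g : G, ∑ i, (W i).character (g * g) * (W i).character 1 := by
          rw [Finset.mul_sum]
          exact Finset.sum_congr rfl fun g _ => (Finset.mul_sum _ _ _).symm
  rw [hRHS]
  have hcol : ∀ g : G, ∑ i, (W i).character (g * g) * (W i).character 1
      = if g * g = 1 then (Fintype.card G : ℂ) else 0 :=
    fun g => sum_char_mul_dim W hsimple hdistinct hcomplete (g * g)
  rw [Finset.sum_congr rfl fun g _ => hcol g]
  rw [← Finset.sum_filter]
  rw [Finset.sum_const]
  -- counting
  have hsplit : (Finset.univ.filter fun g : G => g * g = 1)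
      = insert 1 (Finset.univ.filter fun g : G => g * g = 1 ∧ g ≠ 1) := by
    ext a
    simp only [Finset.mem_filter, Finset.mem_univ, true_and, Finset.mem_insert]
    by_cases ha : a = 1
    · subst ha; simp
    · simp [ha]
  have hnotmem : (1 : G) ∉ (Finset.univ.filter fun g : G => g * g = 1 ∧ g ≠ 1) := by
    simp
  have hcount : (Finset.univ.filter fun g : G => g * g = 1).card
      = 1 + Nat.card {g : G // g * g = 1 ∧ g ≠ 1} := by
    rw [hsplit, Finset.card_insert_of_notMem hnotmem, Nat.card_eq_fintype_card,
      Fintype.card_subtype, add_comm]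
  rw [hcount]
  field_simp
  simp [nsmul_eq_mul]
end
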